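/- Let m > 0 and define ψ : ℝ³∖{0} → ℝ³∖{0} by ψ(x) = −(m²/4) x/‖x‖². Then: (a) for every x ≠ 0 and v ∈ ℝ³, (1 + m/(2‖ψ(x)‖))² ‖Dψ_x(v)‖ = (1 + m/(2‖x‖))² ‖v‖ (so ψ is an isometry of the Schwarzschild metric); (b) ψ(ψ(x)) = x for all x ≠ 0; (c) ψ(x) ≠ x for all x ≠ 0. Consequently ψ generates a fixed-point-free ℤ₂-action on ℝ³∖{0} by isometries of the Schwarzschild metric. -/

import Mathlib

/-- The antipodal inversion `ψ x = -(m²/4) x / ‖x‖²` of punctured `ℝ³` is an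
isometry of the Schwarzschild metric `h = (1 + m/(2‖x‖))⁴ δ`, is an involution,
and has no fixed points; hence it generates a fixed-point-free `ℤ₂`-action by
isometries. -/
theorem stmt_5 (m : ℝ) (hm : 0 < m)
    (ψ : EuclideanSpace ℝ (Fin 3) → EuclideanSpace ℝ (Fin 3))
    (hψ : ∀ x, x ≠ 0 → ψ x = -((m ^ 2 / 4) • (‖x‖ ^ 2)⁻¹ • x)) :
    (∀ x : EuclideanSpace ℝ (Fin 3), x ≠ 0 →
      DifferentiableAt ℝ ψ x ∧
        ∀ v, (1 + m / (2 * ‖ψ x‖)) ^ 2 * ‖fderiv ℝ ψ x v‖ =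
          (1 + m / (2 * ‖x‖)) ^ 2 * ‖v‖) ∧
    (∀ x : EuclideanSpace ℝ (Fin 3), x ≠ 0 → ψ (ψ x) = x) ∧
    (∀ x : EuclideanSpace ℝ (Fin 3), x ≠ 0 → ψ x ≠ x) := by
  -- ψ agrees with minus the inversion in the sphere of radius m/2
  have hinv : ∀ x : EuclideanSpace ℝ (Fin 3), x ≠ 0 →
      ψ x = -(EuclideanGeometry.inversion (0 : EuclideanSpace ℝ (Fin 3)) (m/2) x) := by
    intro x hx
    have hxn : ‖x‖ ≠ 0 := norm_ne_zero_iff.mpr hx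
    rw [hψ x hx, EuclideanGeometry.inversion]
    simp only [vsub_eq_sub, sub_zero, vadd_eq_add, add_zero, dist_zero_right, smul_smul]
    congr 1
    congr 1
    field_simp
    ring
  -- norm of ψ x
  have hnorm : ∀ x : EuclideanSpace ℝ (Fin 3), x ≠ 0 → ‖ψ x‖ = m ^ 2 / (4 * ‖x‖) := by
    intro x hx
    have hxn : (0:ℝ) < ‖x‖ := norm_pos_iff.mpr hx
    rw [hψ x hx, norm_neg, norm_smul, norm_smul, norm_inv, norm_pow, Real.norm_eq_abs,
      Real.norm_eq_abs, abs_of_nonneg (by positivity : (0:ℝ) ≤ m^2/4), abs_of_nonneg hxn.le]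
    field_simp
  have hψne : ∀ x : EuclideanSpace ℝ (Fin 3), x ≠ 0 → ψ x ≠ 0 := by
    intro x hx
    have hxn : (0:ℝ) < ‖x‖ := norm_pos_iff.mpr hx
    have : ‖ψ x‖ > 0 := by rw [hnorm x hx]; positivity
    exact norm_pos_iff.mp this
  refine ⟨?_, ?_, ?_⟩
  · intro x hx
    have hxn : (0:ℝ) < ‖x‖ := norm_pos_iff.mpr hx
    have heq : ψ =ᶠ[nhds x] fun y => -(EuclideanGeometry.inversion (0 : EuclideanSpace ℝ (Fin 3)) (m/2) y) := by
      filter_upwards [IsOpen.mem_nhds (isOpen_compl_singleton) hx] with y hy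
      exact hinv y hy
    have hD : HasFDerivAt ψ
        (-((((m/2) / dist x 0) ^ 2) • ((Submodule.reflection (ℝ ∙ (x - 0))ᗮ : EuclideanSpace ℝ (Fin 3) →L[ℝ] EuclideanSpace ℝ (Fin 3))))) x :=
      ((EuclideanGeometry.hasFDerivAt_inversion hx).neg).congr_of_eventuallyEq heq
    refine ⟨hD.differentiableAt, fun v => ?_⟩
    rw [hD.fderiv]
    have hrefl : ‖(Submodule.reflection (ℝ ∙ (x - 0))ᗮ : EuclideanSpace ℝ (Fin 3) →L[ℝ] EuclideanSpace ℝ (Fin 3)) v‖ = ‖v‖ := by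
      simp
    rw [ContinuousLinearMap.neg_apply, ContinuousLinearMap.smul_apply, norm_neg, norm_smul,
      Real.norm_eq_abs, hrefl, dist_zero_right, abs_of_nonneg (by positivity)]
    rw [hnorm x hx]
    have hmn : m ≠ 0 := hm.ne'
    have hxn' : ‖x‖ ≠ 0 := hxn.ne'
    field_simp
    ring
  · intro x hx
    have hxn : (0:ℝ) < ‖x‖ := norm_pos_iff.mpr hx
    have h1 := hψ (ψ x) (hψne x hx)
    rw [h1, hnorm x hx, hψ x hx]
    have hmn : m ≠ 0 := hm.ne'
    have hc : (m ^ 2 / 4) * ((m ^ 2 / (4 * ‖x‖)) ^ 2)⁻¹ * ((m ^ 2 / 4) * (‖x‖ ^ 2)⁻¹) = 1 := by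
      field_simp
    match_scalars
    field_simp
  · intro x hx hfix
    have hxn : (0:ℝ) < ‖x‖ := norm_pos_iff.mpr hx
    have h := hψ x hx
    rw [hfix] at h
    set a : ℝ := (m ^ 2 / 4) * (‖x‖ ^ 2)⁻¹ with ha
    have hap : 0 < a := by positivity
    have : (1 + a) • x = 0 := by
      linear_combination (norm := module) h
    have h1a : (1 + a) ≠ 0 := by positivity
    exact hx (by simpa [h1a] using smul_eq_zero.mp this)
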